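/- Subsampled point-mass dominating pair bound: let ρ ∈ [0,1], σ > 0, and let μ be the law of a Bernoulli(ρ) random variable. Define P as the Gaussian mixture P = (1-ρ)·N(0, σ²) + ρ·N(1, σ²) and Q = N(0, σ²). Then for every α ∈ (0,1), B_{(P,Q)}(α) ≤ (1-ρ)·α + ρ·(1 - Φ(Φ^{-1}(1-α) - 1/σ)); i.e., the blow-up of the subsampled Gaussian mechanism is a convex combination of the identity and the Gaussian blow-up. -/

import Mathlib

open MeasureTheory ProbabilityTheory Set
open scoped NNReal

/-- Standard normal CDF. -/
noncomputable def Phi : ℝ → ℝ := fun x => ProbabilityTheory.cdf (gaussianReal 0 1) x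

/-- Inverse of the standard normal CDF. -/
noncomputable def PhiInv : ℝ → ℝ := Function.invFun Phi

/-- Blow-up function `B_{(P,Q)}(α) = sup {P(E) : Q(E) ≤ α}`. -/
noncomputable def blowUp {Ω : Type*} [MeasurableSpace Ω] (P Q : Measure Ω) (α : ℝ) : ℝ :=
  sSup {x : ℝ | ∃ E : Set Ω, MeasurableSet E ∧ (Q E).toReal ≤ α ∧ x = (P E).toReal}

lemma gauss_singleton (x : ℝ) : gaussianReal 0 1 {x} = 0 :=
  gaussianReal_absolutelyContinuous 0 one_ne_zero (measure_singleton x)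

lemma Phi_continuous : Continuous Phi := by
  rw [continuous_iff_continuousAt]
  intro x
  have hmono := monotone_cdf (gaussianReal 0 1)
  have hll : Function.leftLim (cdf (gaussianReal 0 1)) x = cdf (gaussianReal 0 1) x := by
    have h0 : (cdf (gaussianReal 0 1)).measure {x} = 0 := by
      rw [measure_cdf]; exact gauss_singleton x
    rw [StieltjesFunction.measure_singleton] at h0
    have h1 : cdf (gaussianReal 0 1) x - Function.leftLim (cdf (gaussianReal 0 1)) x ≤ 0 := by
      by_contra h
      push_neg at h
      simp [ENNReal.ofReal_eq_zero] at h0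
      linarith
    have h2 := hmono.leftLim_le (le_refl x)
    linarith [sub_nonpos.mp h1]
  have : ContinuousAt (cdf (gaussianReal 0 1)) x := by
    refine continuousAt_iff_continuous_left'_right'.2 ⟨?_, ?_⟩
    · exact (hmono.continuousWithinAt_Iio_iff_leftLim_eq).2 hll
    · exact ((cdf (gaussianReal 0 1)).right_continuous x).mono Ioi_subset_Ici_self
  exact this

lemma Phi_inv_spec {y : ℝ} (hy : y ∈ Ioo (0:ℝ) 1) : Phi (PhiInv y) = y := by
  have h1 : ∃ a, Phi a < y :=
    ((tendsto_cdf_atBot (gaussianReal 0 1)).eventually_lt_const hy.1).exists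
  have h2 : ∃ b, y < Phi b :=
    ((tendsto_cdf_atTop (gaussianReal 0 1)).eventually_const_lt hy.2).exists
  obtain ⟨a, ha⟩ := h1
  obtain ⟨b, hb⟩ := h2
  have hab : a ≤ b := by
    by_contra h
    push_neg at h
    exact absurd (monotone_cdf (gaussianReal 0 1) h.le) (by change ¬ Phi b ≤ Phi a; linarith)
  have : y ∈ Phi '' Icc a b :=
    intermediate_value_Icc hab Phi_continuous.continuousOn ⟨ha.le, hb.le⟩
  obtain ⟨c, _, hc⟩ := this
  exact Function.invFun_eq ⟨c, hc⟩

lemma Phi_le_one (x : ℝ) : Phi x ≤ 1 := cdf_le_one _ _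

lemma gauss_Ici (c : ℝ) : gaussianReal 0 1 (Ici c) = ENNReal.ofReal (1 - Phi c) := by
  simp only [Phi]
  have hIio : gaussianReal 0 1 (Iio c) = ENNReal.ofReal (cdf (gaussianReal 0 1) c) := by
    rw [← Iic_diff_right, measure_diff_null (gauss_singleton c)]
    exact (ofReal_cdf _ _).symm
  have hcompl : gaussianReal 0 1 (Ici c) = 1 - gaussianReal 0 1 (Iio c) := by
    rw [← compl_Iio, measure_compl measurableSet_Iio (measure_ne_top _ _), measure_univ]
  rw [hcompl, hIio, ENNReal.ofReal_sub _ (cdf_nonneg _ _), ENNReal.ofReal_one]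

lemma pdf_ratio (v : ℝ≥0) (hv : (v:ℝ) ≠ 0) (x : ℝ) :
    gaussianPDFReal 1 v x = Real.exp ((2*x-1)/(2*(v:ℝ))) * gaussianPDFReal 0 v x := by
  simp only [gaussianPDFReal, sub_zero]
  rw [mul_comm (Real.exp ((2*x-1)/(2*(v:ℝ)))), mul_assoc, mul_assoc, ← Real.exp_add]
  congr 1
  field_simp
  ring

lemma NP (v : ℝ≥0) (hv : v ≠ 0) (t : ℝ) {E : Set ℝ} (hE : MeasurableSet E)
    (hle : gaussianReal 0 v E ≤ gaussianReal 0 v (Ici t)) :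
    gaussianReal 1 v E ≤ gaussianReal 1 v (Ici t) := by
  have hv' : (v:ℝ) ≠ 0 := by exact_mod_cast hv
  have h2v : (0:ℝ) < 2*(v:ℝ) := by positivity
  set k : ℝ := Real.exp ((2*t-1)/(2*(v:ℝ))) with hk
  have hT : MeasurableSet (Ici t) := measurableSet_Ici
  have key₁ : ∀ x : ℝ, x < t → gaussianPDF 1 v x ≤ ENNReal.ofReal k * gaussianPDF 0 v x := by
    intro x hx
    simp only [gaussianPDF, pdf_ratio v hv' x]
    rw [ENNReal.ofReal_mul (Real.exp_nonneg _)]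
    refine mul_le_mul_left (ENNReal.ofReal_le_ofReal (Real.exp_le_exp.2 ?_)) _
    gcongr
  have key₂ : ∀ x : ℝ, t ≤ x → ENNReal.ofReal k * gaussianPDF 0 v x ≤ gaussianPDF 1 v x := by
    intro x hx
    simp only [gaussianPDF, pdf_ratio v hv' x]
    rw [ENNReal.ofReal_mul (Real.exp_nonneg _)]
    refine mul_le_mul_left (ENNReal.ofReal_le_ofReal (Real.exp_le_exp.2 ?_)) _
    gcongr
  have hcancel : gaussianReal 0 v (E \ Ici t) ≤ gaussianReal 0 v (Ici t \ E) := by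
    have e1 := measure_inter_add_diff (μ := gaussianReal 0 v) E hT
    have e2 := measure_inter_add_diff (μ := gaussianReal 0 v) (Ici t) hE
    rw [inter_comm] at e2
    rw [← e1, ← e2] at hle
    exact (ENNReal.add_le_add_iff_left (measure_ne_top _ _)).1 hle
  have hA : gaussianReal 1 v (E \ Ici t) ≤ ENNReal.ofReal k * gaussianReal 0 v (E \ Ici t) := by
    rw [gaussianReal_apply 1 hv, gaussianReal_apply 0 hv,
      ← lintegral_const_mul _ (measurable_gaussianPDF 0 v)]
    refine setLIntegral_mono ((measurable_gaussianPDF 0 v).const_mul _) (fun x hx => ?_)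
    exact key₁ x (by simpa using hx.2)
  have hB : ENNReal.ofReal k * gaussianReal 0 v (Ici t \ E) ≤ gaussianReal 1 v (Ici t \ E) := by
    rw [gaussianReal_apply 1 hv, gaussianReal_apply 0 hv,
      ← lintegral_const_mul _ (measurable_gaussianPDF 0 v)]
    refine setLIntegral_mono (measurable_gaussianPDF 1 v) (fun x hx => ?_)
    exact key₂ x hx.1
  calc gaussianReal 1 v E
      = gaussianReal 1 v (E ∩ Ici t) + gaussianReal 1 v (E \ Ici t) :=
        (measure_inter_add_diff E hT).symm
    _ ≤ gaussianReal 1 v (E ∩ Ici t) + ENNReal.ofReal k * gaussianReal 0 v (E \ Ici t) :=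
        add_le_add_right hA _
    _ ≤ gaussianReal 1 v (E ∩ Ici t) + ENNReal.ofReal k * gaussianReal 0 v (Ici t \ E) :=
        add_le_add_right (mul_le_mul_right hcancel _) _
    _ ≤ gaussianReal 1 v (E ∩ Ici t) + gaussianReal 1 v (Ici t \ E) := add_le_add_right hB _
    _ = gaussianReal 1 v (Ici t) := by
        rw [inter_comm]; exact measure_inter_add_diff (Ici t) hE

theorem stmt19 (ρ σ : ℝ) (hρ : ρ ∈ Icc (0:ℝ) 1) (hσ : 0 < σ)
    (P Q : Measure ℝ)
    (hP : P = ENNReal.ofReal (1 - ρ) • gaussianReal 0 ⟨σ ^ 2, sq_nonneg σ⟩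
            + ENNReal.ofReal ρ • gaussianReal 1 ⟨σ ^ 2, sq_nonneg σ⟩)
    (hQ : Q = gaussianReal 0 ⟨σ ^ 2, sq_nonneg σ⟩) :
    ∀ α ∈ Ioo (0:ℝ) 1,
      blowUp P Q α ≤ (1 - ρ) * α + ρ * (1 - Phi (PhiInv (1 - α) - 1 / σ)) := by
  intro α hα
  set v : ℝ≥0 := ⟨σ ^ 2, sq_nonneg σ⟩ with hvdef
  have hv : v ≠ 0 := by
    refine fun h => ?_
    have : (v:ℝ) = 0 := by rw [h]; rfl
    have : σ ^ 2 = 0 := this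
    nlinarith
  set c : ℝ := PhiInv (1 - α) with hc
  set t : ℝ := σ * c with ht
  have hPhic : Phi c = 1 - α := Phi_inv_spec ⟨by linarith [hα.2], by linarith [hα.1]⟩
  -- scaling: gaussianReal 0 v (Ici s) = ofReal (1 - Phi (s/σ))
  have hmap0 : gaussianReal 0 v = (gaussianReal 0 1).map (fun x => σ * x) := by
    rw [show (fun x : ℝ => σ * x) = (σ * ·) from rfl, gaussianReal_map_const_mul]
    rw [mul_zero, mul_one]
    congr 1
  have hIci0 : ∀ s : ℝ, gaussianReal 0 v (Ici s) = ENNReal.ofReal (1 - Phi (s / σ)) := by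
    intro s
    rw [hmap0, Measure.map_apply (measurable_const_mul σ) measurableSet_Ici]
    have hpre : (fun x : ℝ => σ * x) ⁻¹' Ici s = Ici (s / σ) := by
      ext x
      simp [mem_preimage, mem_Ici, div_le_iff₀ hσ, mul_comm]
    rw [hpre, gauss_Ici]
  have hmap1 : gaussianReal 1 v = (gaussianReal 0 v).map (fun x => x + 1) := by
    rw [show (fun x : ℝ => x + 1) = (· + 1) from rfl, gaussianReal_map_add_const, zero_add]
  have hIci1 : ∀ s : ℝ, gaussianReal 1 v (Ici s) = gaussianReal 0 v (Ici (s - 1)) := by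
    intro s
    rw [hmap1, Measure.map_apply (measurable_add_const 1) measurableSet_Ici]
    congr 1
    ext x
    simp [mem_preimage, mem_Ici]
  have hT0 : gaussianReal 0 v (Ici t) = ENNReal.ofReal α := by
    rw [hIci0, ht, mul_div_cancel_left₀ c hσ.ne', hPhic]
    congr 1
    ring
  have hT1 : gaussianReal 1 v (Ici t) = ENNReal.ofReal (1 - Phi (c - 1 / σ)) := by
    have harg : (t - 1) / σ = c - 1 / σ := by
      rw [ht]
      field_simp
    rw [hIci1, hIci0, harg]
  have hPle : (0:ℝ) ≤ 1 - Phi (c - 1 / σ) := by linarith [Phi_le_one (c - 1 / σ)]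
  -- bound each element of the set
  refine Real.sSup_le ?_ ?_
  · rintro x ⟨E, hE, hQE, rfl⟩
    rw [hQ] at hQE
    have hE0 : gaussianReal 0 v E ≤ gaussianReal 0 v (Ici t) := by
      rw [hT0]
      exact (ENNReal.le_ofReal_iff_toReal_le (measure_ne_top _ _) hα.1.le).2 hQE
    have hNP := NP v hv t hE hE0
    have h1E : (gaussianReal 1 v E).toReal ≤ 1 - Phi (c - 1 / σ) := by
      have := ENNReal.toReal_mono (by rw [hT1]; exact ENNReal.ofReal_ne_top) hNP
      rwa [hT1, ENNReal.toReal_ofReal hPle] at this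
    have hPE : (P E).toReal
        = (1 - ρ) * (gaussianReal 0 v E).toReal + ρ * (gaussianReal 1 v E).toReal := by
      rw [hP]
      rw [Measure.add_apply, Measure.smul_apply, Measure.smul_apply, smul_eq_mul, smul_eq_mul,
        ENNReal.toReal_add (by finiteness) (by finiteness), ENNReal.toReal_mul,
        ENNReal.toReal_mul, ENNReal.toReal_ofReal (by linarith [hρ.2]),
        ENNReal.toReal_ofReal hρ.1]
    rw [hPE]
    have h0E : (gaussianReal 0 v E).toReal ≤ α := hQE
    have h1 : (1 - ρ) * (gaussianReal 0 v E).toReal ≤ (1 - ρ) * α :=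
      mul_le_mul_of_nonneg_left h0E (by linarith [hρ.2])
    have h2 : ρ * (gaussianReal 1 v E).toReal ≤ ρ * (1 - Phi (c - 1 / σ)) :=
      mul_le_mul_of_nonneg_left h1E hρ.1
    linarith
  · have : (0:ℝ) ≤ (1 - ρ) * α := mul_nonneg (by linarith [hρ.2]) hα.1.le
    have h2 : (0:ℝ) ≤ ρ * (1 - Phi (c - 1 / σ)) := mul_nonneg hρ.1 hPle
    linarith
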